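/- Let 𝒜 = 𝔽₂ⁿ carry a symmetric nondegenerate 𝔽₂-bilinear form ω and ℱ = 𝔽₂^m carry a symmetric nondegenerate 𝔽₂-bilinear form λ, and let φ : 𝒜 → ℱ and ψ : ℱ → 𝒜 be 𝔽₂-linear maps satisfying the adjointness (braiding) relation λ(φ(A), f) = ω(A, ψ(f)) for all A ∈ 𝒜, f ∈ ℱ. Define the ω-weight w(J) = #{i : ω(J, êᵢ) = 1}. Then for every β > 0: Σ_{J ∈ range ψ} exp(−β·w(J)) = (1/|ker φ|) · (1 + exp(−β))ⁿ · Σ_{C ∈ ker φ} (tanh(β/2))^{‖C‖}. (The thermal partition function of a stabilizer code at low temperature is Wegner-dual to a high-temperature model of its constraints, i.e. of ker φ.) -/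

import Mathlib

open Finset

/-- Hamming weight of a binary vector. -/
def wt {n : ℕ} (v : Fin n → ZMod 2) : ℕ :=
  (Finset.univ.filter (fun i => v i = 1)).card

noncomputable def sgn (a : ZMod 2) : ℝ := if a = 1 then -1 else 1

lemma zmod2_cases (a : ZMod 2) : a = 0 ∨ a = 1 := by revert a; decide

lemma sgn_zero : sgn 0 = 1 := by norm_num [sgn]

lemma sgn_add (a b : ZMod 2) : sgn (a + b) = sgn a * sgn b := by
  rcases zmod2_cases a with h | h <;> rcases zmod2_cases b with h' | h' <;>
    subst h <;> subst h' <;> norm_num [sgn] <;> decide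

lemma sgn_sum {ι : Type*} (s : Finset ι) (f : ι → ZMod 2) :
    sgn (∑ i ∈ s, f i) = ∏ i ∈ s, sgn (f i) := by
  induction s using Finset.cons_induction with
  | empty => simp [sgn_zero]
  | cons a s ha ih => rw [Finset.sum_cons, Finset.prod_cons, sgn_add, ih]

lemma char_sum {n : ℕ} (t : ℝ) (K : Fin n → ZMod 2) :
    ∑ C : Fin n → ZMod 2, t ^ wt C * sgn (∑ i, C i * K i)
      = ∏ i, (1 + t * sgn (K i)) := by
  have h1 : ∀ C : Fin n → ZMod 2, t ^ wt C * sgn (∑ i, C i * K i)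
      = ∏ i, ((if C i = 1 then t else 1) * sgn (C i * K i)) := by
    intro C
    rw [Finset.prod_mul_distrib, ← sgn_sum]
    congr 1
    rw [wt, Finset.prod_ite, Finset.prod_const, Finset.prod_const, one_pow, mul_one]
  have h2 : ∀ i : Fin n, ∑ c : ZMod 2, ((if c = 1 then t else 1) * sgn (c * K i))
      = 1 + t * sgn (K i) := by
    intro i
    have hu : (Finset.univ : Finset (ZMod 2)) = {0, 1} := by decide
    rw [hu, Finset.sum_insert (by decide), Finset.sum_singleton]
    norm_num [sgn_zero]
  calc ∑ C : Fin n → ZMod 2, t ^ wt C * sgn (∑ i, C i * K i)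
      = ∑ C ∈ Fintype.piFinset (fun _ : Fin n => (Finset.univ : Finset (ZMod 2))),
          ∏ i, ((if C i = 1 then t else 1) * sgn (C i * K i)) := by
        rw [Fintype.piFinset_univ]; exact Finset.sum_congr rfl fun C _ => h1 C
    _ = ∏ i, ∑ c : ZMod 2, ((if c = 1 then t else 1) * sgn (c * K i)) :=
        (Finset.prod_univ_sum (fun _ : Fin n => (Finset.univ : Finset (ZMod 2)))
          (fun i c => (if c = 1 then t else 1) * sgn (c * K i))).symm
    _ = ∏ i, (1 + t * sgn (K i)) := Finset.prod_congr rfl fun i _ => h2 i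


open scoped Classical in
/-- The thermal partition function of a stabilizer code (sum over the realizable
excitation patterns `range ψ`) is Wegner-dual to a high-temperature model of its
constraints `ker φ`, given a linear gauge structure `λ(φ(A), f) = ω(A, ψ(f))`. -/
theorem stabilizer_thermal_dual_to_constraints {n m : ℕ}
    (ω : LinearMap.BilinForm (ZMod 2) (Fin n → ZMod 2))
    (lam : LinearMap.BilinForm (ZMod 2) (Fin m → ZMod 2))
    (hωsymm : ∀ A B, ω A B = ω B A)
    (hωnondeg : ∀ A, (∀ B, ω A B = 0) → A = 0)
    (hlam_symm : ∀ f g, lam f g = lam g f)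
    (hlam_nondeg : ∀ f, (∀ g, lam f g = 0) → f = 0)
    (φ : (Fin n → ZMod 2) →ₗ[ZMod 2] (Fin m → ZMod 2))
    (ψ : (Fin m → ZMod 2) →ₗ[ZMod 2] (Fin n → ZMod 2))
    (hadj : ∀ A f, lam (φ A) f = ω A (ψ f))
    (β : ℝ) (hβ : 0 < β) :
    ∑ J ∈ Finset.univ.filter (fun J => J ∈ LinearMap.range ψ),
        Real.exp (-β *
          ((Finset.univ.filter (fun i => ω J (Pi.single i 1) = 1)).card : ℝ))
      = (1 / (Nat.card (LinearMap.ker φ) : ℝ)) * (1 + Real.exp (-β)) ^ n *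
          ∑ C ∈ Finset.univ.filter (fun C => C ∈ LinearMap.ker φ),
            Real.tanh (β / 2) ^ wt C := by
  set x := Real.exp (-β) with hxdef
  set τ := Real.tanh (β / 2) with hτdef
  set F := Finset.univ.filter (fun J => J ∈ LinearMap.range ψ) with hF
  set Kf := Finset.univ.filter (fun C => C ∈ LinearMap.ker φ) with hKf
  -- weight function
  have hwtdef : ∀ J : Fin n → ZMod 2,
      (Finset.univ.filter (fun i => ω J (Pi.single i 1) = 1)).card
        = wt (fun i => ω J (Pi.single i 1)) := fun J => rfl
  -- decomposition of the bilinear form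
  have hdec : ∀ J C : Fin n → ZMod 2, ω J C = ∑ i, C i * ω J (Pi.single i 1) := by
    intro J C
    conv_lhs => rw [← Finset.univ_sum_single C]
    rw [map_sum]
    refine Finset.sum_congr rfl fun i _ => ?_
    have h1 : Pi.single i (C i) = C i • (Pi.single i (1 : ZMod 2) : Fin n → ZMod 2) := by
      funext j
      by_cases h : j = i <;> simp [Pi.single_apply, h, smul_eq_mul]
    rw [h1, map_smul, smul_eq_mul]
  have hGinj : ∀ J : Fin n → ZMod 2, (∀ i, ω J (Pi.single i 1) = 0) → J = 0 := by
    intro J h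
    refine hωnondeg J fun B => ?_
    rw [hdec J B]
    simp [h]
  -- character orthogonality over range ψ
  have horth : ∀ C : Fin n → ZMod 2,
      ∑ J ∈ F, sgn (ω C J) = if C ∈ LinearMap.ker φ then (F.card : ℝ) else 0 := by
    intro C
    by_cases hC : C ∈ LinearMap.ker φ
    · rw [if_pos hC]
      have h1 : ∀ J ∈ F, sgn (ω C J) = 1 := by
        intro J hJ
        obtain ⟨f, rfl⟩ := (Finset.mem_filter.mp hJ).2
        rw [← hadj, LinearMap.mem_ker.mp hC]
        simp [sgn_zero]
      rw [Finset.sum_congr rfl h1, Finset.sum_const, nsmul_eq_mul, mul_one]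
    · rw [if_neg hC]
      have hφC : φ C ≠ 0 := hC
      obtain ⟨f, hf⟩ : ∃ f, lam (φ C) f ≠ 0 := by
        by_contra h
        push_neg at h
        exact hφC (hlam_nondeg _ h)
      have hf1 : ω C (ψ f) = 1 := by
        rw [← hadj]
        rcases zmod2_cases (lam (φ C) f) with h | h
        · exact absurd h hf
        · exact h
      have hself : ∀ v : Fin n → ZMod 2, v + v = 0 := by
        intro v; funext i; exact CharTwo.add_self_eq_zero (v i)
      have hmem : ∀ J : Fin n → ZMod 2, J ∈ F ↔ J + ψ f ∈ F := by
        intro J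
        simp only [hF, Finset.mem_filter, Finset.mem_univ, true_and]
        constructor
        · intro h; exact add_mem h (LinearMap.mem_range_self ψ f)
        · intro h
          have h2 := add_mem h (LinearMap.mem_range_self ψ f)
          rwa [add_assoc, hself, add_zero] at h2
      have hS : ∑ J ∈ F, sgn (ω C J) = ∑ J ∈ F, sgn (ω C (J + ψ f)) := by
        refine Finset.sum_equiv (Equiv.addRight (ψ f)) (fun J => ?_) (fun J hJ => ?_)
        · simpa using hmem J
        · simp only [Equiv.coe_addRight]
          rw [add_assoc, hself, add_zero]
      have hneg : ∀ J : Fin n → ZMod 2, sgn (ω C (J + ψ f)) = - sgn (ω C J) := by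
        intro J
        rw [map_add, sgn_add, hf1]
        have : sgn 1 = -1 := by norm_num [sgn]
        rw [this]; ring
      have h0 : ∑ J ∈ F, sgn (ω C J) = - ∑ J ∈ F, sgn (ω C J) := by
        conv_lhs => rw [hS]
        rw [Finset.sum_congr rfl fun J _ => hneg J, Finset.sum_neg_distrib]
      linarith
  -- the key MacWilliams-type identity
  have hkey : ∀ t : ℝ, (F.card : ℝ) * (∑ C ∈ Kf, t ^ wt C)
      = ∑ J ∈ F, ((1 - t) ^ wt (fun i => ω J (Pi.single i 1))
          * (1 + t) ^ (n - wt (fun i => ω J (Pi.single i 1)))) := by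
    intro t
    have hprod : ∀ J : Fin n → ZMod 2,
        ∏ i, (1 + t * sgn (ω J (Pi.single i 1)))
          = (1 - t) ^ wt (fun i => ω J (Pi.single i 1))
            * (1 + t) ^ (n - wt (fun i => ω J (Pi.single i 1))) := by
      intro J
      have h1 : ∀ i : Fin n, 1 + t * sgn (ω J (Pi.single i 1))
          = if ω J (Pi.single i 1) = 1 then 1 - t else 1 + t := by
        intro i
        by_cases h : ω J (Pi.single i 1) = 1 <;> simp [h, sgn] <;> ring
      rw [Finset.prod_congr rfl fun i _ => h1 i, Finset.prod_ite,
        Finset.prod_const, Finset.prod_const]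
      have hc := Finset.card_filter_add_card_filter_not
        (s := (Finset.univ : Finset (Fin n))) (p := fun i => ω J (Pi.single i 1) = 1)
      simp only [Finset.card_univ, Fintype.card_fin] at hc
      have hwt : (Finset.univ.filter (fun i => ω J (Pi.single i 1) = 1)).card
          = wt (fun i => ω J (Pi.single i 1)) := rfl
      congr 1
      congr 1
      omega
    calc (F.card : ℝ) * (∑ C ∈ Kf, t ^ wt C)
        = ∑ C ∈ Kf, t ^ wt C * (F.card : ℝ) := by
          rw [Finset.mul_sum]
          exact Finset.sum_congr rfl fun C _ => mul_comm _ _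
      _ = ∑ C : Fin n → ZMod 2,
            (if C ∈ LinearMap.ker φ then t ^ wt C * (F.card : ℝ) else 0) := by
          rw [hKf, Finset.sum_filter]
      _ = ∑ C : Fin n → ZMod 2, t ^ wt C * ∑ J ∈ F, sgn (ω C J) := by
          refine Finset.sum_congr rfl fun C _ => ?_
          rw [horth C, mul_ite, mul_zero]
      _ = ∑ C : Fin n → ZMod 2, ∑ J ∈ F, t ^ wt C * sgn (ω C J) := by
          refine Finset.sum_congr rfl fun C _ => ?_
          rw [Finset.mul_sum]
      _ = ∑ J ∈ F, ∑ C : Fin n → ZMod 2, t ^ wt C * sgn (ω C J) := Finset.sum_comm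
      _ = ∑ J ∈ F, ∑ C : Fin n → ZMod 2,
            t ^ wt C * sgn (∑ i, C i * ω J (Pi.single i 1)) := by
          refine Finset.sum_congr rfl fun J _ => Finset.sum_congr rfl fun C _ => ?_
          rw [← hdec, hωsymm]
      _ = ∑ J ∈ F, ∏ i, (1 + t * sgn (ω J (Pi.single i 1))) := by
          refine Finset.sum_congr rfl fun J _ => ?_
          exact char_sum t (fun i => ω J (Pi.single i 1))
      _ = _ := Finset.sum_congr rfl fun J _ => hprod J
  -- counting : |range ψ| * |ker φ| = 2 ^ n
  have hRK : (F.card : ℝ) * (Kf.card : ℝ) = 2 ^ n := by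
    have h := hkey 1
    have hL : ∑ C ∈ Kf, (1:ℝ) ^ wt C = (Kf.card : ℝ) := by
      simp
    have hR : ∀ J ∈ F, ((1:ℝ) - 1) ^ wt (fun i => ω J (Pi.single i 1))
        * ((1:ℝ) + 1) ^ (n - wt (fun i => ω J (Pi.single i 1)))
          = if J = 0 then (2:ℝ)^n else 0 := by
      intro J hJ
      by_cases hJ0 : J = 0
      · subst hJ0
        have hw0 : wt (fun i => ω (0 : Fin n → ZMod 2) (Pi.single i 1)) = 0 := by
          simp [wt]
        rw [hw0, if_pos rfl]
        norm_num
      · rw [if_neg hJ0]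
        have hw : wt (fun i => ω J (Pi.single i 1)) ≠ 0 := by
          intro h0
          apply hJ0
          apply hGinj
          intro i
          rcases zmod2_cases (ω J (Pi.single i 1)) with h | h
          · exact h
          · exfalso
            have : i ∈ Finset.univ.filter (fun i => ω J (Pi.single i 1) = 1) := by
              simp [h]
            have := Finset.card_pos.mpr ⟨i, this⟩
            rw [hwtdef J] at this
            omega
        rw [sub_self, zero_pow hw, zero_mul]
    rw [hL] at h
    rw [Finset.sum_congr rfl hR, Finset.sum_ite_eq' F 0 (fun _ => (2:ℝ)^n)] at h
    have h0F : (0 : Fin n → ZMod 2) ∈ F := by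
      rw [hF]
      exact Finset.mem_filter.mpr ⟨Finset.mem_univ _, zero_mem _⟩
    rw [if_pos h0F] at h
    norm_num at h ⊢
    linarith
  -- tanh formula
  have hp0 : (0:ℝ) < x := Real.exp_pos _
  have hp : (0:ℝ) < 1 + x := by linarith
  have hτx : τ = (1 - x) / (1 + x) := by
    rw [hτdef, hxdef, Real.tanh_eq_sinh_div_cosh, Real.sinh_eq, Real.cosh_eq]
    have hy : (0:ℝ) < Real.exp (β / 2) := Real.exp_pos _
    have hxy : Real.exp (-β) = (Real.exp (β/2))⁻¹ * (Real.exp (β/2))⁻¹ := by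
      rw [← Real.exp_neg, ← Real.exp_add]
      congr 1
      ring
    rw [Real.exp_neg, hxy]
    have h1 : (0:ℝ) < 1 + (Real.exp (β/2))⁻¹ * (Real.exp (β/2))⁻¹ := by positivity
    field_simp
  -- per-J computation with t = τ
  have hperJ : ∀ J : Fin n → ZMod 2,
      ((1 - τ) ^ wt (fun i => ω J (Pi.single i 1))
        * (1 + τ) ^ (n - wt (fun i => ω J (Pi.single i 1)))) * (1 + x) ^ n
        = 2 ^ n * x ^ wt (fun i => ω J (Pi.single i 1)) := by
    intro J
    set w := wt (fun i => ω J (Pi.single i 1)) with hwdef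
    have hwle : w ≤ n := by
      rw [hwdef, wt]
      calc (Finset.univ.filter _).card ≤ (Finset.univ : Finset (Fin n)).card :=
            Finset.card_filter_le _ _
        _ = n := by simp
    obtain ⟨k, hk⟩ : ∃ k, n = w + k := ⟨n - w, by omega⟩
    have hnk : n - w = k := by omega
    rw [hnk, hk, hτx]
    have hpne : (1:ℝ) + x ≠ 0 := ne_of_gt hp
    field_simp
    have e : ∀ j : ℕ, (1 + x)⁻¹ ^ j * (1 + x) ^ j = 1 := fun j => by
      rw [← mul_pow, inv_mul_cancel₀ hpne, one_pow]
    linear_combination (x ^ w * 2 ^ w * 2 ^ k * (1 + x)⁻¹ ^ k * (1 + x) ^ k) * e w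
      + (x ^ w * 2 ^ w * 2 ^ k) * e k
  -- put everything together
  have hmain : (F.card : ℝ) * (∑ C ∈ Kf, τ ^ wt C) * (1 + x) ^ n
      = 2 ^ n * ∑ J ∈ F, x ^ wt (fun i => ω J (Pi.single i 1)) := by
    rw [hkey τ, Finset.sum_mul, Finset.mul_sum]
    exact Finset.sum_congr rfl fun J _ => hperJ J
  have hA : ∑ J ∈ F, Real.exp (-β *
        ((Finset.univ.filter (fun i => ω J (Pi.single i 1) = 1)).card : ℝ))
      = ∑ J ∈ F, x ^ wt (fun i => ω J (Pi.single i 1)) := by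
    refine Finset.sum_congr rfl fun J _ => ?_
    rw [hwtdef J, mul_comm, Real.exp_nat_mul, hxdef]
  have hNat : (Nat.card (LinearMap.ker φ) : ℝ) = (Kf.card : ℝ) := by
    norm_cast
    rw [Nat.card_eq_fintype_card, hKf]
    rw [Fintype.card_subtype]
  have hK0 : (Kf.card : ℝ) ≠ 0 := by
    have : (0 : Fin n → ZMod 2) ∈ Kf := by
      rw [hKf]; exact Finset.mem_filter.mpr ⟨Finset.mem_univ _, zero_mem _⟩
    have := Finset.card_pos.mpr ⟨0, this⟩
    exact_mod_cast this.ne'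
  have hF0 : (F.card : ℝ) ≠ 0 := by
    have h0F : (0 : Fin n → ZMod 2) ∈ F := by
      rw [hF]; exact Finset.mem_filter.mpr ⟨Finset.mem_univ _, zero_mem _⟩
    have := Finset.card_pos.mpr ⟨0, h0F⟩
    exact_mod_cast this.ne'
  rw [hA, hNat]
  have hcancel : (Kf.card : ℝ) * (∑ J ∈ F, x ^ wt (fun i => ω J (Pi.single i 1)))
      = (∑ C ∈ Kf, τ ^ wt C) * (1 + x) ^ n := by
    apply mul_left_cancel₀ hF0
    linear_combination (∑ J ∈ F, x ^ wt (fun i => ω J (Pi.single i 1))) * hRK - hmain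
  field_simp
  linear_combination hcancel
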